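/- Let X be a countable set and let E ⊆ X × X have bounded geometry: there is M ∈ ℕ such that for every x ∈ X, |{y : (x,y) ∈ E ∪ E⁻¹}| ≤ M. Let Δ^E be the Laplacian operator on ℓ²(X; ℂ) associated to E. Then for ξ ∈ ℓ²(X; ℂ), one has Δ^E ξ = 0 if and only if ξ is constant on each equivalence class of the equivalence relation on X generated by E (i.e. ξ(x) = ξ(y) whenever x and y are joined by a finite chain of pairs in E ∪ E⁻¹). -/

import Mathlib

open scoped ENNReal

/-- The inverse of a relation `E ⊆ X × X`. -/
def relInv {X : Type*} (E : Set (X × X)) : Set (X × X) := {p | (p.2, p.1) ∈ E}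

/-- The set `{y : (x,y) ∈ E'}` where `E' = (E ∪ E⁻¹) ∖ diagonal`. -/
def lapNbr {X : Type*} (E : Set (X × X)) (x : X) : Set X :=
  {y | ((x, y) ∈ E ∨ (y, x) ∈ E) ∧ y ≠ x}

/-- The pointwise action of the Laplacian `Δ^E`:
`(Δ^E ξ)(x) = |{y : (x,y) ∈ E'}|·ξ(x) − Σ_{y : (x,y) ∈ E'} ξ(y)`. -/
noncomputable def lapApply {X : Type*} (E : Set (X × X)) (ξ : X → ℂ) (x : X) : ℂ :=
  ((lapNbr E x).ncard : ℂ) * ξ x - ∑ᶠ y ∈ lapNbr E x, ξ y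

lemma norm_sq_complex (z : ℂ) : ‖z‖ ^ 2 = Complex.normSq z := by
  rw [Complex.sq_norm]

lemma norm_sub_sq_complex (a b : ℂ) :
    ‖a - b‖ ^ 2 = ‖a‖ ^ 2 + ‖b‖ ^ 2 - 2 * ((starRingEnd ℂ a) * b).re := by
  rw [norm_sq_complex, norm_sq_complex, norm_sq_complex]
  simp only [Complex.normSq_apply, Complex.sub_re, Complex.sub_im, Complex.mul_re,
    Complex.conj_re, Complex.conj_im]
  ring

lemma conj_mul_nat (n : ℕ) (z : ℂ) :
    ((starRingEnd ℂ) z * ((n : ℂ) * z)).re = (n : ℝ) * ‖z‖ ^ 2 := by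
  rw [norm_sq_complex, Complex.normSq_apply]
  simp only [Complex.mul_re, Complex.mul_im, Complex.conj_re, Complex.conj_im,
    Complex.natCast_re, Complex.natCast_im]
  ring

/-- For `E ⊆ X × X` of bounded geometry on a countable set `X` and
`ξ ∈ ℓ²(X; ℂ)`, one has `Δ^E ξ = 0` if and only if `ξ` is constant on each equivalence
class of the equivalence relation generated by `E` (i.e. points joined by a finite chain
of pairs in `E ∪ E⁻¹`). -/
theorem stmt_7 {X : Type*} [Countable X] (E : Set (X × X)) (M : ℕ)
    (hbg : ∀ x : X, ({y | (x, y) ∈ E ∪ relInv E}).Finite ∧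
      ({y | (x, y) ∈ E ∪ relInv E}).ncard ≤ M)
    (ξ : lp (fun _ : X => ℂ) 2) :
    (∀ x : X, lapApply E (fun z => ξ z) x = 0) ↔
      (∀ x y : X,
        Relation.ReflTransGen (fun a b => (a, b) ∈ E ∨ (b, a) ∈ E) x y → ξ x = ξ y) := by
  classical
  have hNfin : ∀ x : X, (lapNbr E x).Finite := by
    intro x
    refine (hbg x).1.subset ?_
    intro y hy
    exact hy.1.elim (fun h => Or.inl h) (fun h => Or.inr h)
  set T : X → Finset X := fun x => (hNfin x).toFinset with hT
  have hmemT : ∀ x y : X, y ∈ T x ↔ y ∈ lapNbr E x := by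
    intro x y; simp [hT, Set.Finite.mem_toFinset]
  have hncard : ∀ x : X, (lapNbr E x).ncard = (T x).card := by
    intro x; rw [Set.ncard_eq_toFinset_card _ (hNfin x)]
  have hlap : ∀ x : X, lapApply E (fun z => ξ z) x
      = ((T x).card : ℂ) * ξ x - ∑ y ∈ T x, ξ y := by
    intro x
    rw [lapApply, hncard, finsum_mem_eq_finite_toFinset_sum _ (hNfin x)]
  constructor
  · -- hard direction
    intro hΔ
    have hharm : ∀ x : X, ∑ y ∈ T x, ξ y = ((T x).card : ℂ) * ξ x := by
      intro x
      have := hΔ x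
      rw [hlap x, sub_eq_zero] at this
      exact this.symm
    have hcardM : ∀ x : X, (T x).card ≤ M := by
      intro x
      calc (T x).card = (lapNbr E x).ncard := (hncard x).symm
        _ ≤ ({y | (x, y) ∈ E ∪ relInv E}).ncard := by
            apply Set.ncard_le_ncard _ (hbg x).1
            intro y hy
            exact hy.1.elim (fun h => Or.inl h) (fun h => Or.inr h)
        _ ≤ M := (hbg x).2
    have hsymm : ∀ x y : X, y ∈ T x ↔ x ∈ T y := by
      intro x y
      rw [hmemT, hmemT]
      constructor <;> rintro ⟨h, hne⟩ <;> exact ⟨h.symm, Ne.symm hne⟩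
    set a : X → ℝ := fun x => ‖ξ x‖ ^ 2 with ha
    have hanneg : ∀ x, 0 ≤ a x := fun x => sq_nonneg _
    have hasum : Summable a := by
      have h2 : (0 : ℝ) < ENNReal.toReal 2 := by norm_num
      have := (lp.memℓp ξ).summable h2
      have h22 : ENNReal.toReal 2 = (2 : ℝ) := by norm_num
      rw [h22] at this
      convert this using 2 with x
      rw [ha]
      norm_num
    -- the three summands
    set G₁ : X × X → ℝ := fun p => if p.2 ∈ T p.1 then a p.1 else 0 with hG1def
    set G₂ : X × X → ℝ := fun p => if p.2 ∈ T p.1 then a p.2 else 0 with hG2def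
    set G₃ : X × X → ℝ :=
      fun p => if p.2 ∈ T p.1 then 2 * ((starRingEnd ℂ (ξ p.1)) * ξ p.2).re else 0 with hG3def
    set F : X × X → ℝ := fun p => if p.2 ∈ T p.1 then ‖ξ p.1 - ξ p.2‖ ^ 2 else 0 with hFdef
    have hFnneg : ∀ p, 0 ≤ F p := by
      intro p; rw [hFdef]; dsimp only; split
      · exact sq_nonneg _
      · exact le_rfl
    -- fiber summability and fiber sums
    have hfib1 : ∀ x : X, Summable (fun y => G₁ (x, y)) := by
      intro x
      exact summable_of_ne_finset_zero (s := T x) (fun y hy => if_neg hy)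
    have htsum1 : ∀ x : X, ∑' y, G₁ (x, y) = ((T x).card : ℝ) * a x := by
      intro x
      rw [tsum_eq_sum (s := T x) (fun y hy => if_neg hy)]
      dsimp only
      rw [Finset.sum_congr rfl (fun y (hy : y ∈ T x) => if_pos hy), Finset.sum_const,
        nsmul_eq_mul]
    have hbound : Summable (fun x => ((T x).card : ℝ) * a x) := by
      refine Summable.of_nonneg_of_le
        (fun x => mul_nonneg (Nat.cast_nonneg _) (hanneg x)) ?_ (hasum.mul_left (M : ℝ))
      intro x
      exact mul_le_mul_of_nonneg_right (by exact_mod_cast hcardM x) (hanneg x)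
    have hG1sum : Summable G₁ := by
      refine (summable_prod_of_nonneg ?_).mpr ⟨hfib1, ?_⟩
      · intro p; rw [hG1def]; dsimp only; split
        · exact hanneg _
        · exact le_rfl
      · refine hbound.congr fun x => ?_
        exact (htsum1 x).symm
    have hswap : ∀ p : X × X, G₂ p = G₁ ((Equiv.prodComm X X) p) := by
      rintro ⟨x, y⟩
      rw [hG1def, hG2def]
      dsimp only [Equiv.prodComm_apply, Prod.swap]
      exact if_congr (hsymm x y) rfl rfl
    have hG2sum : Summable G₂ := by
      rw [show G₂ = G₁ ∘ (Equiv.prodComm X X) from funext hswap]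
      exact ((Equiv.prodComm X X).summable_iff).mpr hG1sum
    have htsumG2 : ∑' p, G₂ p = ∑' p, G₁ p := by
      rw [tsum_congr hswap]
      exact (Equiv.prodComm X X).tsum_eq G₁
    have habs3 : ∀ p : X × X, |G₃ p| ≤ G₁ p + G₂ p := by
      rintro ⟨x, y⟩
      rw [hG1def, hG2def, hG3def]
      dsimp only
      split
      · have h1 : |((starRingEnd ℂ (ξ x)) * ξ y).re| ≤ ‖ξ x‖ * ‖ξ y‖ := by
          calc |((starRingEnd ℂ (ξ x)) * ξ y).re| ≤ ‖(starRingEnd ℂ (ξ x)) * ξ y‖ :=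
                Complex.abs_re_le_norm _
            _ = ‖ξ x‖ * ‖ξ y‖ := by rw [norm_mul, RCLike.norm_conj]
        calc |2 * ((starRingEnd ℂ (ξ x)) * ξ y).re| = 2 * |((starRingEnd ℂ (ξ x)) * ξ y).re| := by
              rw [abs_mul, abs_two]
          _ ≤ 2 * (‖ξ x‖ * ‖ξ y‖) := by linarith
          _ = 2 * ‖ξ x‖ * ‖ξ y‖ := by ring
          _ ≤ ‖ξ x‖ ^ 2 + ‖ξ y‖ ^ 2 := two_mul_le_add_sq _ _
          _ = a x + a y := rfl
      · simp
    have hG3sum : Summable G₃ := by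
      refine summable_abs_iff.mp ?_
      refine Summable.of_nonneg_of_le (fun p => abs_nonneg _) habs3 (hG1sum.add hG2sum)
    have hfib3 : ∀ x : X, Summable (fun y => G₃ (x, y)) := by
      intro x
      exact summable_of_ne_finset_zero (s := T x) (fun y hy => if_neg hy)
    have htsum3 : ∀ x : X, ∑' y, G₃ (x, y) = 2 * (((T x).card : ℝ) * a x) := by
      intro x
      rw [tsum_eq_sum (s := T x) (fun y hy => if_neg hy)]
      dsimp only
      rw [Finset.sum_congr rfl (fun y (hy : y ∈ T x) => if_pos hy), ← Finset.mul_sum,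
        ← Complex.re_sum, ← Finset.mul_sum, hharm x, conj_mul_nat]
    -- decomposition of F
    have hFsplit : ∀ p, F p = G₁ p + G₂ p - G₃ p := by
      rintro ⟨x, y⟩
      rw [hFdef, hG1def, hG2def, hG3def]
      dsimp only
      split
      · exact norm_sub_sq_complex _ _
      · ring
    have hFsum : Summable F := by
      rw [show F = fun p => G₁ p + G₂ p - G₃ p from funext hFsplit]
      exact (hG1sum.add hG2sum).sub hG3sum
    -- total sums
    have hA1 : ∑' p, G₁ p = ∑' x, ((T x).card : ℝ) * a x := by
      rw [Summable.tsum_prod' hG1sum hfib1]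
      exact tsum_congr htsum1
    have hA3 : ∑' p, G₃ p = 2 * ∑' x, ((T x).card : ℝ) * a x := by
      rw [Summable.tsum_prod' hG3sum hfib3, tsum_congr htsum3]
      exact tsum_mul_left
    have hFzero : ∑' p, F p = 0 := by
      calc ∑' p, F p = ∑' p, (G₁ p + G₂ p - G₃ p) := tsum_congr hFsplit
        _ = (∑' p, G₁ p + ∑' p, G₂ p) - ∑' p, G₃ p := by
            rw [Summable.tsum_sub (hG1sum.add hG2sum) hG3sum, Summable.tsum_add hG1sum hG2sum]
        _ = 0 := by rw [htsumG2, hA1, hA3]; ring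
    -- local constancy
    have hkey : ∀ x y : X, y ∈ lapNbr E x → ξ x = ξ y := by
      intro x y hy
      have h1 : F (x, y) ≤ 0 := hFzero ▸ Summable.le_tsum hFsum (x, y) (fun p _ => hFnneg p)
      have h2 : F (x, y) = 0 := le_antisymm h1 (hFnneg _)
      rw [hFdef] at h2
      dsimp only at h2
      rw [if_pos ((hmemT x y).mpr hy)] at h2
      have h3 : ‖ξ x - ξ y‖ = 0 := by
        have := sq_eq_zero_iff.mp h2
        exact this
      have h4 : (ξ : X → ℂ) x - ξ y = 0 := norm_eq_zero.mp h3
      linear_combination h4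
    intro x y hxy
    induction hxy with
    | refl => rfl
    | @tail b c hab hbc ih =>
        by_cases hcb : c = b
        · rw [ih, hcb]
        · exact ih.trans (hkey b c ⟨hbc, hcb⟩)
  · -- easy direction
    intro hconst x
    rw [hlap x, sub_eq_zero]
    have : ∀ y ∈ T x, (ξ : X → ℂ) y = ξ x := by
      intro y hy
      rw [hmemT] at hy
      exact (hconst x y (Relation.ReflTransGen.single hy.1)).symm
    rw [Finset.sum_congr rfl this, Finset.sum_const, nsmul_eq_mul]
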